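/- For any finite poset P and positive integer n, the number of strictly order-preserving maps P → [n] equals Σ_{w ∈ L(P)} C(n + des(w), p), where p = |P|, L(P) is the set of linear extensions of P (encoded as permutations via a fixed natural labeling), and des(w) is the number of descents of w. -/

import Mathlib

open Finset

section ChainLemmas

variable {α : Type*} [Preorder α] {p : ℕ}

private lemma chain_strictMono (g : Fin p → α)
    (h : ∀ i : Fin p, ∀ hh : (i : ℕ) + 1 < p, g i < g ⟨(i : ℕ) + 1, hh⟩) :
    StrictMono g := by
  have key : ∀ d : ℕ, 0 < d → ∀ i : Fin p, ∀ hd : (i : ℕ) + d < p,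
      g i < g ⟨(i : ℕ) + d, hd⟩ := by
    intro d
    induction d with
    | zero => intro h0; omega
    | succ d ih =>
      intro _ i hd
      rcases Nat.eq_zero_or_pos d with rfl | hdpos
      · exact h i hd
      · have h1 : (i : ℕ) + d < p := by omega
        have h2 := h ⟨(i : ℕ) + d, h1⟩ (by simpa [Nat.add_assoc] using hd)
        exact (ih hdpos i h1).trans h2
  intro i j hij
  have hij' : (i : ℕ) < (j : ℕ) := hij
  have hjlt := j.isLt
  have := key ((j : ℕ) - (i : ℕ)) (by omega) i (by omega)
  have hjj : (⟨(i : ℕ) + ((j : ℕ) - (i : ℕ)), by omega⟩ : Fin p) = j :=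
    Fin.ext (by simp only [Fin.val_mk]; omega)
  rwa [hjj] at this

private lemma chain_mono (g : Fin p → α)
    (h : ∀ i : Fin p, ∀ hh : (i : ℕ) + 1 < p, g i ≤ g ⟨(i : ℕ) + 1, hh⟩) :
    Monotone g := by
  have key : ∀ d : ℕ, ∀ i : Fin p, ∀ hd : (i : ℕ) + d < p,
      g i ≤ g ⟨(i : ℕ) + d, hd⟩ := by
    intro d
    induction d with
    | zero => intro i hd; exact le_of_eq (congrArg g (Fin.ext rfl).symm)
    | succ d ih =>
      intro i hd
      have h1 : (i : ℕ) + d < p := by omega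
      have h2 := h ⟨(i : ℕ) + d, h1⟩ (by simpa [Nat.add_assoc] using hd)
      exact (ih i h1).trans h2
  intro i j hij
  have hij' : (i : ℕ) ≤ (j : ℕ) := hij
  have hjlt := j.isLt
  have := key ((j : ℕ) - (i : ℕ)) i (by omega)
  have hjj : (⟨(i : ℕ) + ((j : ℕ) - (i : ℕ)), by omega⟩ : Fin p) = j :=
    Fin.ext (by simp only [Fin.val_mk]; omega)
  rwa [hjj] at this

private lemma sm_le {p N : ℕ} {b : Fin p → Fin N} (hb : StrictMono b) (j : Fin p) :
    (j : ℕ) ≤ (b j : ℕ) := by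
  obtain ⟨j, hj⟩ := j
  induction j with
  | zero => exact Nat.zero_le _
  | succ k ih =>
    have hk : k < p := by omega
    have h1 : (b ⟨k, hk⟩ : ℕ) < (b ⟨k + 1, hj⟩ : ℕ) :=
      hb (by rw [Fin.lt_def]; simp only [Fin.val_mk]; omega)
    have h2 := ih hk
    simp only [Fin.val_mk] at h2 ⊢
    omega

end ChainLemmas

section Counting

variable (n p : ℕ) (D : ℕ → Prop) [DecidablePred D]

private def cnt (k : ℕ) : ℕ := ((Finset.range k).filter D).card

private lemma cnt_succ (k : ℕ) : cnt D (k + 1) = cnt D k + if D k then 1 else 0 := by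
  unfold cnt
  rw [Finset.range_add_one, Finset.filter_insert]
  split
  · rw [Finset.card_insert_of_notMem (by simp)]
  · rw [add_zero]

private lemma cnt_mono : Monotone (cnt D) := fun _ _ hab =>
  Finset.card_le_card (Finset.filter_subset_filter _ (Finset.range_subset_range.2 hab))

private lemma cnt_le (k : ℕ) : cnt D k ≤ k :=
  le_trans (Finset.card_le_card (Finset.filter_subset _ _)) (by simp)

private lemma cardStrictMonoMaps (N : ℕ) :
    Nat.card {b : Fin p → Fin N // StrictMono b} = N.choose p := by
  have e : {b : Fin p → Fin N // StrictMono b} ≃ {s : Finset (Fin N) // s.card = p} :=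
    { toFun := fun b => ⟨Finset.univ.image b.1, by
        rw [Finset.card_image_of_injective _ b.2.injective, Finset.card_univ,
          Fintype.card_fin]⟩
      invFun := fun s => ⟨fun i => s.1.orderEmbOfFin s.2 i, (s.1.orderEmbOfFin s.2).strictMono⟩
      left_inv := fun b => Subtype.ext <| by
        exact (Finset.orderEmbOfFin_unique _
          (fun x => Finset.mem_image_of_mem _ (Finset.mem_univ x)) b.2).symm
      right_inv := fun s => Subtype.ext <| by
        apply Finset.coe_injective
        rw [Finset.coe_image, Finset.coe_univ, Set.image_univ, Finset.range_orderEmbOfFin] }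
  rw [Nat.card_congr e, Nat.card_eq_fintype_card, Fintype.card_finset_len,
    Fintype.card_fin]

private lemma count_good :
    Nat.card {a : Fin p → Fin n // ∀ i : Fin p, ∀ h : (i : ℕ) + 1 < p,
        a i ≤ a ⟨(i : ℕ) + 1, h⟩ ∧ (¬ D i → a i < a ⟨(i : ℕ) + 1, h⟩)} =
      (n + cnt D (p - 1)).choose p := by
  set m := cnt D (p - 1) with hm
  have cnt_le_m : ∀ i : Fin p, cnt D i ≤ m := by
    intro i
    rw [hm]
    exact cnt_mono D (by have := i.isLt; omega)
  have e : {a : Fin p → Fin n // ∀ i : Fin p, ∀ h : (i : ℕ) + 1 < p,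
        a i ≤ a ⟨(i : ℕ) + 1, h⟩ ∧ (¬ D i → a i < a ⟨(i : ℕ) + 1, h⟩)} ≃
      {b : Fin p → Fin (n + m) // StrictMono b} := by
    refine
      { toFun := fun a => ⟨fun i => ⟨(a.1 i : ℕ) + cnt D i, ?_⟩, ?_⟩
        invFun := fun b => ⟨fun i => ⟨(b.1 i : ℕ) - cnt D i, ?_⟩, ?_⟩
        left_inv := ?_
        right_inv := ?_ }
    · exact Nat.add_lt_add_of_lt_of_le (a.1 i).isLt (cnt_le_m i)
    · -- StrictMono of the forward map
      apply chain_strictMono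
      intro i hh
      have step := a.2 i hh
      have h3 := cnt_succ D (i : ℕ)
      rw [Fin.lt_def]
      simp only [Fin.val_mk]
      by_cases hD : D (i : ℕ)
      · have h1 := Fin.le_def.1 step.1
        rw [h3, if_pos hD]
        omega
      · have h1 := Fin.lt_def.1 (step.2 hD)
        rw [h3, if_neg hD]
        omega
    · -- bound for inverse
      have hb := b.2
      have hAmono : Monotone (fun j : Fin p => (b.1 j : ℕ) - cnt D j) := by
        apply chain_mono
        intro j hh
        show (b.1 j : ℕ) - cnt D (j : ℕ) ≤
          (b.1 ⟨(j : ℕ) + 1, hh⟩ : ℕ) - cnt D ((⟨(j : ℕ) + 1, hh⟩ : Fin p) : ℕ)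
        have h1 : (b.1 j : ℕ) < (b.1 ⟨(j : ℕ) + 1, hh⟩ : ℕ) :=
          Fin.lt_def.1 (hb (by rw [Fin.lt_def]; simp only [Fin.val_mk]; omega))
        have h2 := le_trans (cnt_le D (j : ℕ)) (sm_le hb j)
        have h3 := cnt_succ D (j : ℕ)
        simp only [Fin.val_mk]
        by_cases hD : D (j : ℕ)
        · rw [h3, if_pos hD]; omega
        · rw [h3, if_neg hD]; omega
      have hp0 : 0 < p := i.pos
      have hilt := i.isLt
      set last : Fin p := ⟨p - 1, by omega⟩ with hlast_def
      have hlastval : (last : ℕ) = p - 1 := rfl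
      have hlast : i ≤ last := by rw [Fin.le_def]; omega
      have h2 := hAmono hlast
      simp only at h2
      have h3 : cnt D (last : ℕ) = m := by rw [hlastval, hm]
      have h4 := le_trans (cnt_le D (last : ℕ)) (sm_le hb last)
      have h5 := (b.1 last).isLt
      omega
    · -- the inverse lands in the good set
      intro i hh
      have hb := b.2
      have h1 : (b.1 i : ℕ) < (b.1 ⟨(i : ℕ) + 1, hh⟩ : ℕ) :=
        Fin.lt_def.1 (hb (by rw [Fin.lt_def]; simp only [Fin.val_mk]; omega))
      have h2 := le_trans (cnt_le D (i : ℕ)) (sm_le hb i)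
      have h3 := cnt_succ D (i : ℕ)
      constructor
      · rw [Fin.le_def]
        simp only [Fin.val_mk]
        by_cases hD : D (i : ℕ)
        · rw [h3, if_pos hD]; omega
        · rw [h3, if_neg hD]; omega
      · intro hD
        rw [Fin.lt_def]
        simp only [Fin.val_mk]
        rw [h3, if_neg hD]
        omega
    · -- left inverse
      rintro ⟨a, ha⟩
      apply Subtype.ext
      funext i
      apply Fin.ext
      simp
    · -- right inverse
      rintro ⟨b, hb⟩
      apply Subtype.ext
      funext i
      apply Fin.ext
      have h2 := le_trans (cnt_le D (i : ℕ)) (sm_le hb i)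
      simp only [Fin.val_mk]
      omega
  rw [Nat.card_congr e, cardStrictMonoMaps]

end Counting

section Main

variable {P : Type*} [Fintype P] [DecidableEq P] [PartialOrder P] {n p : ℕ}

private def key (ω : P ≃ Fin p) (φ : P → Fin n) (t : P) : Lex (Fin n × (Fin p)ᵒᵈ) :=
  toLex (φ t, OrderDual.toDual (ω t))

private lemma key_lt_iff (ω : P ≃ Fin p) (φ : P → Fin n) (s t : P) :
    key ω φ s < key ω φ t ↔ (φ s < φ t ∨ (φ s = φ t ∧ ω t < ω s)) := by
  rw [key, key, Prod.Lex.lt_iff]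
  simp [OrderDual.toDual_lt_toDual]

private def Sorted (ω : P ≃ Fin p) (σ : P ≃ Fin p) (φ : P → Fin n) : Prop :=
  ∀ i j : Fin p, i < j → key ω φ (σ.symm i) < key ω φ (σ.symm j)

private lemma sorted_apply {ω σ : P ≃ Fin p} {φ : P → Fin n} (hσ : Sorted ω σ φ)
    {x y : P} (hxy : key ω φ x < key ω φ y) : σ x < σ y := by
  rcases lt_trichotomy (σ x) (σ y) with h | h | h
  · exact h
  · exact absurd hxy (by simp [σ.injective (h : σ x = σ y)])
  · have := hσ _ _ h
    simp only [Equiv.symm_apply_apply] at this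
    exact absurd hxy (asymm this)

private lemma sorted_unique {ω σ τ : P ≃ Fin p} {φ : P → Fin n}
    (hσ : Sorted ω σ φ) (hτ : Sorted ω τ φ) : σ = τ := by
  have hsm : StrictMono (fun i => τ (σ.symm i)) := by
    intro i j hij
    exact sorted_apply hτ (hσ i j hij)
  let g : Fin p ≃o Fin p :=
    { toEquiv := σ.symm.trans τ
      map_rel_iff' := by
        intro a b
        exact hsm.le_iff_le }
  have hg : g = OrderIso.refl (Fin p) := Subsingleton.elim _ _
  have hg2 : σ.symm.trans τ = Equiv.refl (Fin p) := congrArg (fun f : Fin p ≃o Fin p => f.toEquiv) hg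
  apply Equiv.ext
  intro x
  have h2 := congrArg (fun e : Fin p ≃ Fin p => e (σ x)) hg2
  simp only [Equiv.trans_apply, Equiv.symm_apply_apply, Equiv.refl_apply] at h2
  exact h2.symm

private lemma exists_sorted (hp : Fintype.card P = p) (ω : P ≃ Fin p) (φ : P → Fin n) :
    ∃ σ : P ≃ Fin p, Sorted ω σ φ := by
  have hK : Function.Injective (key ω φ) := by
    intro s t hst
    have h2 : (ofLex (key ω φ s)).2 = (ofLex (key ω φ t)).2 := by rw [hst]
    simp only [key, ofLex_toLex] at h2
    exact ω.injective (OrderDual.toDual.injective h2)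
  set s : Finset (Lex (Fin n × (Fin p)ᵒᵈ)) := Finset.univ.image (key ω φ) with hs_def
  have hs : s.card = p := by
    rw [hs_def, Finset.card_image_of_injective _ hK, Finset.card_univ, hp]
  have hmem : ∀ t : P, key ω φ t ∈ s := fun t =>
    Finset.mem_image_of_mem _ (Finset.mem_univ t)
  let e1 : P ≃ {x // x ∈ s} :=
    Equiv.ofBijective (fun t => ⟨key ω φ t, hmem t⟩)
      ⟨fun a b hab => hK (congrArg Subtype.val hab), by
        rintro ⟨x, hx⟩
        rcases Finset.mem_image.1 hx with ⟨t, _, rfl⟩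
        exact ⟨t, rfl⟩⟩
  let e2 : Fin p ≃o {x // x ∈ s} := s.orderIsoOfFin hs
  refine ⟨e1.trans e2.toEquiv.symm, ?_⟩
  intro i j hij
  have h1 : ∀ i : Fin p, key ω φ ((e1.trans e2.toEquiv.symm).symm i) = (e2 i : _) := by
    intro i
    have : (e1 ((e1.trans e2.toEquiv.symm).symm i)) = e2 i := by
      simp [Equiv.symm_trans_apply]
    exact congrArg Subtype.val this
  rw [h1 i, h1 j]
  exact Subtype.coe_lt_coe.2 (e2.strictMono hij)

private lemma sorted_of_steps (ω σ : P ≃ Fin p) (φ : P → Fin n)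
    (h : ∀ i : Fin p, ∀ hh : (i : ℕ) + 1 < p,
      key ω φ (σ.symm i) < key ω φ (σ.symm ⟨(i : ℕ) + 1, hh⟩)) :
    Sorted ω σ φ :=
  fun i j hij => chain_strictMono (fun i => key ω φ (σ.symm i)) h hij

end Main

open Classical in
/-- The number of strictly order-preserving maps `P → [n]` equals
`Σ_{w ∈ L(P)} C(n + des(w), p)`, summing over linear extensions `σ` encoded as
permutation words `w = ω ∘ σ⁻¹` via a fixed natural labeling `ω`. -/
theorem stmt_4 {P : Type*} [Fintype P] [DecidableEq P] [PartialOrder P]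
    (n p : ℕ) (hp : p = Fintype.card P)
    (ω : P ≃ Fin p) (hω : ∀ s t : P, s < t → ω s < ω t) :
    Nat.card {φ : P → Fin n // ∀ s t : P, s < t → φ s < φ t} =
      ∑ σ : P ≃ Fin p,
        if (∀ s t : P, s < t → σ s < σ t) then
          (n + Nat.card {i : Fin p // ∃ h : (i : ℕ) + 1 < p,
              (ω (σ.symm ⟨(i : ℕ) + 1, h⟩) : ℕ) < (ω (σ.symm i) : ℕ)}).choose p
        else 0 := by
  classical
  -- descent predicate
  set Desc : (P ≃ Fin p) → ℕ → Prop := fun σ k =>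
    ∃ h : k + 1 < p,
      (ω (σ.symm ⟨k + 1, h⟩) : ℕ) < (ω (σ.symm ⟨k, Nat.lt_of_succ_lt h⟩) : ℕ) with hDesc
  -- linear extensions and strict maps
  set LinExt : (P ≃ Fin p) → Prop := fun σ => ∀ s t : P, s < t → σ s < σ t with hLinExt
  set Strict : (P → Fin n) → Prop := fun φ => ∀ s t : P, s < t → φ s < φ t with hStrict
  -- L1 : linext + sorted → strict
  have L1 : ∀ (σ : P ≃ Fin p) (φ : P → Fin n), LinExt σ → Sorted ω σ φ → Strict φ := by
    intro σ φ hl hs s t hst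
    have h1 := hs (σ s) (σ t) (hl s t hst)
    simp only [Equiv.symm_apply_apply] at h1
    rcases (key_lt_iff ω φ s t).1 h1 with h | ⟨_, h⟩
    · exact h
    · exact absurd (hω s t hst) (asymm h)
  -- L2 : strict + sorted → linext
  have L2 : ∀ (σ : P ≃ Fin p) (φ : P → Fin n), Strict φ → Sorted ω σ φ → LinExt σ := by
    intro σ φ hφ hs s t hst
    exact sorted_apply hs ((key_lt_iff ω φ s t).2 (Or.inl (hφ s t hst)))
  -- main equivalence
  have E : {φ : P → Fin n // Strict φ} ≃
      Σ σ : P ≃ Fin p, {φ : P → Fin n // LinExt σ ∧ Sorted ω σ φ} := by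
    refine
      { toFun := fun φ =>
          ⟨Classical.choose (exists_sorted hp.symm ω φ.1),
            φ.1, ?_, Classical.choose_spec (exists_sorted hp.symm ω φ.1)⟩
        invFun := fun x => ⟨x.2.1, L1 x.1 x.2.1 x.2.2.1 x.2.2.2⟩
        left_inv := fun φ => rfl
        right_inv := ?_ }
    · exact L2 _ φ.1 φ.2 (Classical.choose_spec (exists_sorted hp.symm ω φ.1))
    · rintro ⟨σ, φ, hl, hs⟩
      have h : Classical.choose (exists_sorted hp.symm ω φ) = σ :=
        sorted_unique (Classical.choose_spec (exists_sorted hp.symm ω φ)) hs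
      exact Sigma.ext h (by subst h; rfl)
  rw [Nat.card_congr E]
  -- card of sigma
  letI : ∀ σ : P ≃ Fin p, Fintype {φ : P → Fin n // LinExt σ ∧ Sorted ω σ φ} :=
    fun σ => Fintype.ofFinite _
  rw [Nat.card_eq_fintype_card, Fintype.card_sigma]
  rw [Finset.sum_congr rfl]
  intro σ _
  rw [← Nat.card_eq_fintype_card]
  by_cases hl : LinExt σ
  · rw [if_pos hl]
    -- reduce to sorted only
    have e1 : {φ : P → Fin n // LinExt σ ∧ Sorted ω σ φ} ≃
        {φ : P → Fin n // Sorted ω σ φ} :=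
      Equiv.subtypeEquivRight (fun φ => and_iff_right hl)
    -- step characterization
    have step_iff : ∀ (φ : P → Fin n), Sorted ω σ φ ↔
        (∀ i : Fin p, ∀ h : (i : ℕ) + 1 < p,
          φ (σ.symm i) ≤ φ (σ.symm ⟨(i : ℕ) + 1, h⟩) ∧
          (¬ Desc σ i → φ (σ.symm i) < φ (σ.symm ⟨(i : ℕ) + 1, h⟩))) := by
      intro φ
      constructor
      · intro hs i h
        have h1 := hs i ⟨(i : ℕ) + 1, h⟩ (by simp [Fin.lt_def])
        rcases (key_lt_iff ω φ _ _).1 h1 with h2 | ⟨h2, h3⟩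
        · exact ⟨le_of_lt h2, fun _ => h2⟩
        · refine ⟨le_of_eq h2, fun hD => absurd ?_ hD⟩
          exact ⟨h, h3⟩
      · intro hs
        apply sorted_of_steps
        intro i h
        rw [key_lt_iff]
        rcases hs i h with ⟨h1, h2⟩
        by_cases hD : Desc σ (i : ℕ)
        · rcases lt_or_eq_of_le h1 with h3 | h3
          · exact Or.inl h3
          · refine Or.inr ⟨h3, ?_⟩
            rcases hD with ⟨hh, hlt⟩
            exact (Fin.lt_def).2 hlt
        · exact Or.inl (h2 hD)
    have e2 : {φ : P → Fin n // Sorted ω σ φ} ≃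
        {a : Fin p → Fin n // ∀ i : Fin p, ∀ h : (i : ℕ) + 1 < p,
          a i ≤ a ⟨(i : ℕ) + 1, h⟩ ∧ (¬ Desc σ i → a i < a ⟨(i : ℕ) + 1, h⟩)} := by
      refine Equiv.subtypeEquiv (Equiv.arrowCongr σ (Equiv.refl (Fin n))) ?_
      intro φ
      rw [step_iff φ]
      simp only [Equiv.arrowCongr_apply, Function.comp_apply, Equiv.refl_apply,
        Function.comp]
    rw [Nat.card_congr (e1.trans e2), count_good]
    congr 1
    -- identify descent count
    have : Nat.card {i : Fin p // ∃ h : (i : ℕ) + 1 < p,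
        (ω (σ.symm ⟨(i : ℕ) + 1, h⟩) : ℕ) < (ω (σ.symm i) : ℕ)} =
        cnt (Desc σ) (p - 1) := by
      rw [Nat.card_eq_fintype_card, Fintype.card_subtype]
      unfold cnt
      apply Finset.card_bij (fun (i : Fin p) _ => (i : ℕ))
      · intro i hi
        rw [Finset.mem_filter] at hi ⊢
        rcases hi.2 with ⟨h, hlt⟩
        exact ⟨Finset.mem_range.2 (by omega), h, hlt⟩
      · intro a _ b _ hab
        exact Fin.ext hab
      · intro k hk
        rw [Finset.mem_filter, Finset.mem_range] at hk
        rcases hk with ⟨hk1, h, hlt⟩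
        exact ⟨⟨k, by omega⟩, Finset.mem_filter.2 ⟨Finset.mem_univ _, h, hlt⟩, rfl⟩
    rw [this]
  · rw [if_neg hl]
    haveI : IsEmpty {φ : P → Fin n // LinExt σ ∧ Sorted ω σ φ} :=
      ⟨fun x => hl x.2.1⟩
    exact Nat.card_of_isEmpty
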